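/- Let q > 0. For every real z, the expectation of z^{fp(Π)} for a random permutation Π of {1,…,n} distributed according to the fixed point biased measure P_n^q, i.e. the quantity (Σ_{σ∈S_n} (zq)^{fp(σ)}) / (Σ_{σ∈S_n} q^{fp(σ)}), converges to e^{q(z-1)} as n → ∞. -/

import Mathlib

open Finset Filter

/-- The number of fixed points of a permutation of `{1,…,n}`. -/
def fp {n : ℕ} (σ : Equiv.Perm (Fin n)) : ℕ :=
  (Finset.univ.filter fun i => σ i = i).card

lemma card_fixing {n : ℕ} (t : Finset (Fin n)) :
    (Finset.univ.filter fun σ : Equiv.Perm (Fin n) => ∀ i ∈ t, σ i = i).card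
      = (n - t.card).factorial := by
  rw [← Fintype.card_subtype]
  have e : {σ : Equiv.Perm (Fin n) // ∀ i ∈ t, σ i = i} ≃ Equiv.Perm {i : Fin n // i ∉ t} := by
    refine (Equiv.subtypeEquiv (Equiv.refl _) ?_).trans
      (Equiv.Perm.subtypeEquivSubtypePerm (fun i => i ∉ t)).symm
    intro σ
    constructor
    · intro h a ha
      exact h a (not_not.mp ha)
    · intro h a ha
      exact h a (not_not.mpr ha)
  rw [Fintype.card_congr e, Fintype.card_perm]
  congr 1
  rw [Fintype.card_subtype_compl]
  simp [Fintype.card_coe]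

lemma key (n : ℕ) (x : ℝ) :
    ∑ σ : Equiv.Perm (Fin n), x ^ fp σ
      = (n.factorial : ℝ) * ∑ k ∈ Finset.range (n + 1), (x - 1) ^ k / k.factorial := by
  have h1 : ∀ σ : Equiv.Perm (Fin n), (x : ℝ) ^ fp σ
      = ∑ t ∈ (Finset.univ.filter fun i => σ i = i).powerset, (x - 1) ^ t.card := by
    intro σ
    have h := Finset.prod_add (fun _ : Fin n => x - 1) (fun _ : Fin n => (1 : ℝ))
        (Finset.univ.filter fun i => σ i = i)
    simp only [sub_add_cancel, Finset.prod_const, Finset.prod_const_one, mul_one] at h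
    simpa [fp] using h
  have h2 : ∀ σ : Equiv.Perm (Fin n),
      (Finset.univ.filter fun i => σ i = i).powerset
        = (Finset.univ : Finset (Fin n)).powerset.filter fun t => ∀ i ∈ t, σ i = i := by
    intro σ
    ext t
    simp [Finset.subset_iff]
  calc ∑ σ : Equiv.Perm (Fin n), x ^ fp σ
      = ∑ σ : Equiv.Perm (Fin n), ∑ t ∈ (Finset.univ : Finset (Fin n)).powerset,
          if (∀ i ∈ t, σ i = i) then (x - 1) ^ t.card else 0 := by
        refine Finset.sum_congr rfl fun σ _ => ?_
        rw [h1 σ, h2 σ, Finset.sum_filter]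
    _ = ∑ t ∈ (Finset.univ : Finset (Fin n)).powerset,
          ∑ σ : Equiv.Perm (Fin n), if (∀ i ∈ t, σ i = i) then (x - 1) ^ t.card else 0 :=
        Finset.sum_comm
    _ = ∑ t ∈ (Finset.univ : Finset (Fin n)).powerset,
          ((n - t.card).factorial : ℝ) * (x - 1) ^ t.card := by
        refine Finset.sum_congr rfl fun t _ => ?_
        rw [← Finset.sum_filter, Finset.sum_const, card_fixing, nsmul_eq_mul]
    _ = ∑ k ∈ Finset.range (n + 1), ∑ t ∈ Finset.powersetCard k (Finset.univ : Finset (Fin n)),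
          ((n - t.card).factorial : ℝ) * (x - 1) ^ t.card := by
        rw [Finset.sum_powerset]
        simp
    _ = ∑ k ∈ Finset.range (n + 1),
          (n.choose k) • (((n - k).factorial : ℝ) * (x - 1) ^ k) := by
        refine Finset.sum_congr rfl fun k _ => ?_
        have := Finset.sum_powersetCard k (Finset.univ : Finset (Fin n))
          (fun m => ((n - m).factorial : ℝ) * (x - 1) ^ m)
        simpa using this
    _ = (n.factorial : ℝ) * ∑ k ∈ Finset.range (n + 1), (x - 1) ^ k / k.factorial := by
        rw [Finset.mul_sum]
        refine Finset.sum_congr rfl fun k hk => ?_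
        have hkn : k ≤ n := Nat.lt_succ_iff.mp (Finset.mem_range.mp hk)
        have hfact : (n.choose k : ℝ) * k.factorial * (n - k).factorial = n.factorial := by
          rw [← Nat.cast_mul, ← Nat.cast_mul, Nat.choose_mul_factorial_mul_factorial hkn]
        have hk0 : (k.factorial : ℝ) ≠ 0 := Nat.cast_ne_zero.mpr k.factorial_ne_zero
        rw [nsmul_eq_mul]
        field_simp
        rw [← hfact]
        ring

lemma partial_sum_tendsto (x : ℝ) :
    Tendsto (fun n : ℕ => ∑ k ∈ Finset.range (n + 1), x ^ k / k.factorial)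
      atTop (nhds (Real.exp x)) := by
  have hS : HasSum (fun k : ℕ => x ^ k / k.factorial) (Real.exp x) := by
    rw [Real.exp_eq_exp_ℝ]
    exact NormedSpace.expSeries_div_hasSum_exp x
  have := hS.tendsto_sum_nat
  exact this.comp (tendsto_add_atTop_nat 1)

/-- For `q > 0` and any real `z`, the probability generating function of the number of
fixed points under `P_n^q`, namely `(Σ_{σ∈S_n} (zq)^{fp σ}) / (Σ_{σ∈S_n} q^{fp σ})`,
converges to `e^{q(z-1)}` as `n → ∞`. -/
theorem fp_biased_pgf_tendsto (q : ℝ) (hq : 0 < q) (z : ℝ) :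
    Tendsto (fun n : ℕ =>
        (∑ σ : Equiv.Perm (Fin n), (z * q) ^ fp σ) /
          ∑ σ : Equiv.Perm (Fin n), q ^ fp σ)
      atTop (nhds (Real.exp (q * (z - 1)))) := by
  have heq : ∀ n : ℕ,
      (∑ σ : Equiv.Perm (Fin n), (z * q) ^ fp σ) / (∑ σ : Equiv.Perm (Fin n), q ^ fp σ)
        = (∑ k ∈ Finset.range (n + 1), (z * q - 1) ^ k / k.factorial)
            / ∑ k ∈ Finset.range (n + 1), (q - 1) ^ k / k.factorial := by
    intro n
    rw [key n (z * q), key n q]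
    have hn0 : (n.factorial : ℝ) ≠ 0 := Nat.cast_ne_zero.mpr n.factorial_ne_zero
    rw [mul_div_mul_left _ _ hn0]
  have hdiv := (partial_sum_tendsto (z * q - 1)).div (partial_sum_tendsto (q - 1))
    (Real.exp_ne_zero _)
  rw [← Real.exp_sub] at hdiv
  have : z * q - 1 - (q - 1) = q * (z - 1) := by ring
  rw [this] at hdiv
  simpa only [heq, Pi.div_def] using hdiv
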